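/- Core of the main Theorem 2 (Lemma 4.5 of the paper, 'S-matrix'): the S-matrix of the quantum PSU(3) representation of SL(2,ℤ) is proportional to that of the quantum PSU(2) representation at ξ = ζ⁴. Precisely, there exists a constant c ∈ ℂ such that for all a, b ∈ ZMod r: s(a·b) = c · χ(a·b) · (ζ^{2·a·b} − ζ^{−2·a·b}). (Since moreover the diagonal T-matrices of the two representations coincide entrywise, the PSU(2) representation of SL(2,ℤ) is a direct summand of the PSU(3) representation.) -/

import Mathlib

open Complex Finset

open scoped Classical

/-- For `n ∈ ZMod r`, the complex number `ζ^n = exp(2πi·n̂/r)` where `n̂` is the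
canonical lift of `n`. -/
noncomputable def zmodExp (r : ℕ) (n : ZMod r) : ℂ :=
  Complex.exp (2 * Real.pi * Complex.I * (n.val : ℂ) / (r : ℂ))

/-- The alternating sum `s(m) = ∑_{j=0}^{r} (−1)^j·ζ^{m·Tr(u^j)}`. -/
noncomputable def sSum (r : ℕ) {F : Type*} [Field F] [Fintype F] [Algebra (ZMod r) F]
    (u : F) (m : ZMod r) : ℂ :=
  ∑ j ∈ Finset.range (r + 1), (-1 : ℂ) ^ j * zmodExp r (m * Algebra.trace (ZMod r) F (u ^ j))

/-- The quadratic character of `ZMod r` with values in `ℂ`: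
`χ(m) = 1` if `m` is a nonzero square, `−1` if `m` is a nonsquare, `χ(0) = 0`. -/
noncomputable def chiC (r : ℕ) (m : ZMod r) : ℂ :=
  if m = 0 then 0 else if IsSquare m then 1 else -1

section Helpers
variable {r : ℕ} [NeZero r]

lemma zmodExp_eq_stdAddChar (n : ZMod r) : zmodExp r n = ZMod.stdAddChar n := by
  rw [ZMod.stdAddChar_apply, ZMod.toCircle_apply, zmodExp]

lemma zmodExp_add (x y : ZMod r) : zmodExp r (x + y) = zmodExp r x * zmodExp r y := by
  simp only [zmodExp_eq_stdAddChar]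
  exact AddChar.map_add_eq_mul _ x y

lemma zmodExp_zero : zmodExp r (0 : ZMod r) = 1 := by
  simp only [zmodExp_eq_stdAddChar]
  exact AddChar.map_zero_eq_one _

lemma chiC_eq_quad (hr : r.Prime) (m : ZMod r) :
    haveI : Fact r.Prime := ⟨hr⟩
    chiC r m = ((quadraticChar (ZMod r) m : ℤ) : ℂ) := by
  haveI : Fact r.Prime := ⟨hr⟩
  rw [chiC, quadraticChar_apply, quadraticCharFun]
  split_ifs <;> simp

lemma chiC_mul (hr : r.Prime) (x y : ZMod r) :
    chiC r (x * y) = chiC r x * chiC r y := by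
  haveI : Fact r.Prime := ⟨hr⟩
  rw [chiC_eq_quad hr, chiC_eq_quad hr, chiC_eq_quad hr, map_mul]
  push_cast
  ring

lemma chiC_zero : chiC r (0 : ZMod r) = 0 := if_pos rfl

lemma chiC_of_square {m : ZMod r} (h0 : m ≠ 0) (hs : IsSquare m) : chiC r m = 1 := by
  rw [chiC, if_neg h0, if_pos hs]

lemma chiC_of_nonsquare {m : ZMod r} (hs : ¬ IsSquare m) : chiC r m = -1 := by
  have h0 : m ≠ 0 := by rintro rfl; exact hs ⟨0, by ring⟩
  rw [chiC, if_neg h0, if_neg hs]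

lemma chiC_dichotomy {m : ZMod r} (h0 : m ≠ 0) : chiC r m = 1 ∨ chiC r m = -1 := by
  rw [chiC, if_neg h0]; split_ifs <;> simp

end Helpers

section FieldHelpers
open Polynomial

variable {r : ℕ} (hr : r.Prime) (hodd : Odd r)
variable {F : Type*} [Field F] [Fintype F] [Algebra (ZMod r) F]
variable (hcard : Fintype.card F = r ^ 2)

include hr

lemma myCharP : CharP F r := by
  haveI : Fact r.Prime := ⟨hr⟩
  exact charP_of_injective_algebraMap (algebraMap (ZMod r) F).injective r

include hcard hodd

lemma myFinrank : Module.finrank (ZMod r) F = 2 := by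
  haveI : Fact r.Prime := ⟨hr⟩
  have h := Module.card_eq_pow_finrank (K := ZMod r) (V := F)
  rw [ZMod.card, hcard] at h
  exact (Nat.pow_right_injective hr.two_le h.symm)

lemma myPowPow (x : F) : (x ^ r) ^ r = x := by
  calc (x ^ r) ^ r = x ^ (r ^ 2) := by rw [← pow_mul, sq]
  _ = x := by rw [← hcard, FiniteField.pow_card]

/-- fixed points of frobenius are in the prime field -/
lemma myFix (x : F) (hx : x ^ r = x) : ∃ c : ZMod r, algebraMap (ZMod r) F c = x := by
  haveI : Fact r.Prime := ⟨hr⟩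
  by_contra hcon
  push_neg at hcon
  set P : Polynomial F := X ^ r - X with hP
  have h1r : 1 < r := hr.one_lt
  have hPne : P ≠ 0 := FiniteField.X_pow_card_sub_X_ne_zero F h1r
  have hdeg : P.natDegree = r := FiniteField.X_pow_card_sub_X_natDegree_eq F h1r
  set S : Finset F := (Finset.univ : Finset (ZMod r)).image (algebraMap (ZMod r) F) with hS
  have hxS : x ∉ S := by
    simp only [hS, Finset.mem_image]
    rintro ⟨c, -, hc⟩
    exact hcon c hc
  have hsub : (insert x S).val ⊆ P.roots := by
    intro y hy
    simp only [Finset.insert_val, Multiset.mem_ndinsert, Finset.mem_val] at hy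
    rw [mem_roots hPne]
    rcases hy with rfl | hy
    · simp [hP, IsRoot, hx]
    · simp only [hS, Finset.mem_image] at hy
      obtain ⟨c, -, rfl⟩ := hy
      simp only [hP, IsRoot, eval_sub, eval_pow, eval_X]
      rw [← map_pow, ZMod.pow_card, sub_self]
  have hcardle := Polynomial.card_le_degree_of_subset_roots hsub
  have hScard : S.card = r := by
    rw [hS, Finset.card_image_of_injective _ (algebraMap (ZMod r) F).injective,
      Finset.card_univ, ZMod.card]
  rw [Finset.card_insert_of_notMem hxS, hScard, hdeg] at hcardle
  omega

/-- every element of the prime field is a square in F -/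
lemma mySq (c : ZMod r) (h2 : r ≠ 2) : ∃ e : F, e ^ 2 = algebraMap (ZMod r) F c := by
  haveI : Fact r.Prime := ⟨hr⟩
  rcases eq_or_ne c 0 with rfl | hc
  · exact ⟨0, by simp⟩
  haveI : CharP F r := myCharP hr
  have hF2 : ringChar F ≠ 2 := by
    rw [ringChar.eq F r]; exact h2
  have hι : algebraMap (ZMod r) F c ≠ 0 := by
    exact fun h => hc ((algebraMap (ZMod r) F).injective (by rw [h, map_zero]))
  have key : algebraMap (ZMod r) F c ^ (Fintype.card F / 2) = 1 := by
    obtain ⟨k, hk⟩ := hodd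
    have hexp : Fintype.card F / 2 = (r - 1) * (k + 1) := by
      rw [hcard]
      subst hk
      have h1 : 2 * k + 1 - 1 = 2 * k := by omega
      rw [h1]
      have : (2 * k + 1) ^ 2 = 2 * (2 * k * (k + 1)) + 1 := by ring
      omega
    rw [hexp, pow_mul, ← map_pow, ZMod.pow_card_sub_one_eq_one hc, map_one, one_pow]
  have := (FiniteField.isSquare_iff hF2 hι).mpr key
  obtain ⟨e, he⟩ := this
  exact ⟨e, by rw [sq]; exact he.symm⟩

end FieldHelpers

section FieldHelpers2

variable {r : ℕ} (hr : r.Prime)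
variable {F : Type*} [Field F] [Fintype F] [Algebra (ZMod r) F]
variable (hcard : Fintype.card F = r ^ 2)

set_option linter.unusedSectionVars false

include hr hcard

lemma myPowPow' (x : F) : (x ^ r) ^ r = x := by
  calc (x ^ r) ^ r = x ^ (r ^ 2) := by rw [← pow_mul, sq]
  _ = x := by rw [← hcard, FiniteField.pow_card]

lemma myTrace (hex : ∃ w : F, w ^ r ≠ w) (x : F) :
    algebraMap (ZMod r) F (Algebra.trace (ZMod r) F x) = x + x ^ r := by
  haveI : Fact r.Prime := ⟨hr⟩
  haveI : CharP F r := charP_of_injective_algebraMap (algebraMap (ZMod r) F).injective r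
  have hrank : Module.finrank (ZMod r) F = 2 := by
    have h := Module.card_eq_pow_finrank (K := ZMod r) (V := F)
    rw [ZMod.card, hcard] at h
    exact (Nat.pow_right_injective hr.two_le h.symm)
  let σ : F ≃ₐ[ZMod r] F :=
    { toFun := fun y => y ^ r
      invFun := fun y => y ^ r
      left_inv := myPowPow' hr hcard
      right_inv := myPowPow' hr hcard
      map_mul' := fun x y => mul_pow x y r
      map_add' := fun x y => add_pow_char x y r
      commutes' := fun c => by
        show (algebraMap (ZMod r) F c) ^ r = algebraMap (ZMod r) F c
        rw [← map_pow, ZMod.pow_card] }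
  obtain ⟨w, hw⟩ := hex
  have hσne : σ ≠ AlgEquiv.refl := by
    intro h
    exact hw (congrArg (fun f => f w) h)
  have hcardAut : Fintype.card (F ≃ₐ[ZMod r] F) = 2 := by
    rw [← Nat.card_eq_fintype_card, IsGalois.card_aut_eq_finrank, hrank]
  have huniv : (Finset.univ : Finset (F ≃ₐ[ZMod r] F)) = ({AlgEquiv.refl, σ} : Finset (F ≃ₐ[ZMod r] F)) := by
    symm
    apply Finset.eq_univ_of_card
    rw [Finset.card_insert_of_notMem (by simpa using hσne.symm), Finset.card_singleton, hcardAut]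
  rw [trace_eq_sum_automorphisms, huniv, Finset.sum_pair (Ne.symm hσne)]
  rfl

end FieldHelpers2

section UHelpers
open Polynomial

variable {r : ℕ} (hr : r.Prime)
variable {F : Type*} [Field F] [Fintype F] [Algebra (ZMod r) F]
variable {u : F} (hu : orderOf u = r + 1)

set_option linter.unusedSectionVars false

include hu

lemma myUinj {i j : ℕ} (hi : i < r + 1) (hj : j < r + 1) (h : u ^ i = u ^ j) : i = j :=
  pow_injOn_Iio_orderOf (by simpa [hu] using hi) (by simpa [hu] using hj) h

lemma myU1 : u ^ (r + 1) = 1 := by rw [← hu]; exact pow_orderOf_eq_one u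

lemma myU0 : u ≠ 0 := by
  intro h
  have := myU1 hu
  rw [h, zero_pow (by omega)] at this
  exact zero_ne_one this

lemma myUsurj (v : F) (hv : v ^ (r + 1) = 1) : ∃ j, j < r + 1 ∧ u ^ j = v := by
  by_contra hcon
  push_neg at hcon
  set P : Polynomial F := X ^ (r + 1) - C 1 with hP
  have hPne : P ≠ 0 := X_pow_sub_C_ne_zero (by omega) 1
  have hdeg : P.natDegree = r + 1 := natDegree_X_pow_sub_C
  set S : Finset F := (Finset.range (r + 1)).image (u ^ ·) with hS
  have hvS : v ∉ S := by
    simp only [hS, Finset.mem_image, Finset.mem_range]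
    rintro ⟨j, hj, hjv⟩
    exact hcon j hj hjv
  have hsub : (insert v S).val ⊆ P.roots := by
    intro y hy
    simp only [Finset.insert_val, Multiset.mem_ndinsert, Finset.mem_val] at hy
    rw [mem_roots hPne]
    have hyroot : y ^ (r + 1) = 1 := by
      rcases hy with rfl | hy
      · exact hv
      · simp only [hS, Finset.mem_image, Finset.mem_range] at hy
        obtain ⟨j, -, rfl⟩ := hy
        rw [← pow_mul, mul_comm, pow_mul, myU1 hu, one_pow]
    simp [hP, IsRoot, hyroot]
  have hcardle := Polynomial.card_le_degree_of_subset_roots hsub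
  have hScard : S.card = r + 1 := by
    rw [hS, Finset.card_image_of_injOn, Finset.card_range]
    intro i hi j hj hij
    exact myUinj hu (Finset.mem_range.mp hi) (Finset.mem_range.mp hj) hij
  rw [Finset.card_insert_of_notMem hvS, hScard, hdeg] at hcardle
  omega

end UHelpers

section ExistHelper

variable {r : ℕ} (hr : r.Prime)
variable {F : Type*} [Field F] [Fintype F] [Algebra (ZMod r) F]

set_option linter.unusedSectionVars false

include hr

lemma myTwoNeZero (h2 : r ≠ 2) : (2 : ZMod r) ≠ 0 := by
  haveI : NeZero r := ⟨hr.pos.ne'⟩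
  intro h
  have : ((2 : ℕ) : ZMod r) = 0 := by exact_mod_cast h
  rw [ZMod.natCast_eq_zero_iff] at this
  exact h2 ((Nat.prime_dvd_prime_iff_eq hr Nat.prime_two).mp this)

lemma myTwoNeZeroF (h2 : r ≠ 2) : (2 : F) ≠ 0 := by
  haveI : Fact r.Prime := ⟨hr⟩
  intro h
  apply myTwoNeZero hr h2
  apply (algebraMap (ZMod r) F).injective
  rw [map_ofNat, h, map_zero]

lemma myExist (h2 : r ≠ 2)
    (hfix : ∀ x : F, x ^ r = x → ∃ c : ZMod r, algebraMap (ZMod r) F c = x)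
    (hsq : ∀ c : ZMod r, ∃ e : F, e ^ 2 = algebraMap (ZMod r) F c)
    (t : ZMod r) (hns : ¬ IsSquare (t ^ 2 - 4)) :
    ∃ v : F, v ^ (r + 1) = 1 ∧ v ≠ 0 ∧ v ^ r = v⁻¹ ∧
      v + v⁻¹ = algebraMap (ZMod r) F t := by
  haveI : Fact r.Prime := ⟨hr⟩
  haveI : CharP F r := charP_of_injective_algebraMap (algebraMap (ZMod r) F).injective r
  set ι : ZMod r →+* F := algebraMap (ZMod r) F with hι
  have hinj : Function.Injective ι := ι.injective
  have hd0 : t ^ 2 - 4 ≠ 0 := fun h => hns (h ▸ ⟨0, by ring⟩)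
  obtain ⟨e, he⟩ := hsq (t ^ 2 - 4)
  have he0 : e ≠ 0 := by
    rintro rfl
    exact hd0 (hinj (by rw [map_zero, ← he]; ring))
  have h2F : (2 : F) ≠ 0 := myTwoNeZeroF hr h2
  have h2e : ι (2 : ZMod r) = (2 : F) := by rw [map_ofNat]
  -- e ^ r = - e
  have her : e ^ r = -e := by
    have h1 : (e ^ r) ^ 2 = e ^ 2 := by
      rw [← pow_mul, mul_comm, pow_mul, he, ← map_pow, ZMod.pow_card]
    have hfac : (e ^ r - e) * (e ^ r + e) = 0 := by linear_combination h1
    rcases mul_eq_zero.mp hfac with h | h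
    · exfalso
      obtain ⟨c, hc⟩ := hfix e (sub_eq_zero.mp h)
      exact hns ⟨c, hinj (by rw [map_mul, hc, ← he]; ring)⟩
    · exact eq_neg_of_add_eq_zero_left h
  set v : F := (ι t + e) / 2 with hv
  have htr : (ι t) ^ r = ι t := by rw [← map_pow, ZMod.pow_card]
  have h2r : (2 : F) ^ r = 2 := by
    rw [← h2e, ← map_pow, ZMod.pow_card]
  have hvr : v ^ r = (ι t - e) / 2 := by
    rw [hv, div_pow, add_pow_char, htr, her, h2r, sub_eq_add_neg]
  have hmul : v * v ^ r = 1 := by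
    rw [hv, hvr, div_mul_div_comm]
    have hnum : (ι t + e) * (ι t - e) = 4 := by
      have he2 : e ^ 2 = (ι t) ^ 2 - 4 := by
        rw [he, map_sub, map_pow]
        congr 1
        rw [map_ofNat]
      linear_combination -he2
    rw [hnum]
    have h4 : (2 : F) * 2 = 4 := by norm_num
    rw [h4, div_self (by rw [← h4]; exact mul_ne_zero h2F h2F)]
  have hv0 : v ≠ 0 := by
    intro h0
    rw [h0, zero_mul] at hmul
    exact zero_ne_one hmul
  have hvinv : v ^ r = v⁻¹ := inv_eq_of_mul_eq_one_right hmul |>.symm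
  refine ⟨v, ?_, hv0, hvinv, ?_⟩
  · rw [pow_succ, mul_comm]
    exact hmul
  · rw [← hvinv, hv, hvr]
    field_simp
    ring
end ExistHelper

section FiberHelper

variable {r : ℕ} (hr : r.Prime)
variable {F : Type*} [Field F] [Fintype F] [Algebra (ZMod r) F]
variable {u : F} (hu : orderOf u = r + 1)
set_option linter.unusedSectionVars false
include hr hu

set_option maxHeartbeats 1600000 in
lemma myFiber (hodd : Odd r)
    (htrace : ∀ x : F, algebraMap (ZMod r) F (Algebra.trace (ZMod r) F x) = x + x ^ r)
    (hfix : ∀ x : F, x ^ r = x → ∃ c : ZMod r, algebraMap (ZMod r) F c = x)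
    (hsq : ∀ c : ZMod r, ∃ e : F, e ^ 2 = algebraMap (ZMod r) F c)
    (t : ZMod r) :
    ∑ j ∈ (Finset.range (r + 1)).filter
        (fun j => Algebra.trace (ZMod r) F (u ^ j) = t), (-1 : ℂ) ^ j
      = chiC r (t + 2) - chiC r (t - 2) := by
  haveI : Fact r.Prime := ⟨hr⟩
  haveI : NeZero r := ⟨hr.pos.ne'⟩
  haveI : CharP F r := charP_of_injective_algebraMap (algebraMap (ZMod r) F).injective r
  set ι : ZMod r →+* F := algebraMap (ZMod r) F with hιdef
  have hinj : Function.Injective ι := ι.injective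
  have h2 : r ≠ 2 := by rintro rfl; rw [Nat.odd_iff] at hodd; simp at hodd
  have hr3 : 3 ≤ r := by have := hr.two_le; omega
  have h2Z : (2 : ZMod r) ≠ 0 := myTwoNeZero hr h2
  have h4Z : (4 : ZMod r) ≠ 0 := by
    have h44 : (4 : ZMod r) = 2 * 2 := by norm_num
    rw [h44]; exact mul_ne_zero h2Z h2Z
  have hsq4 : IsSquare (4 : ZMod r) := ⟨2, by norm_num⟩
  have hU1 : u ^ (r + 1) = 1 := myU1 hu
  have hu0 : u ≠ 0 := myU0 hu
  have hxj1 : ∀ j : ℕ, (u ^ j) ^ (r + 1) = 1 := fun j => by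
    rw [← pow_mul, mul_comm, pow_mul, hU1, one_pow]
  have hxj0 : ∀ j : ℕ, (u ^ j) ≠ 0 := fun j => pow_ne_zero j hu0
  have hxjr : ∀ j : ℕ, (u ^ j) ^ r = (u ^ j)⁻¹ := by
    intro j
    have h1 : (u ^ j) * (u ^ j) ^ r = 1 := by
      rw [← pow_succ']
      exact hxj1 j
    exact (eq_inv_of_mul_eq_one_left (by rw [mul_comm] at h1; exact h1)).symm ▸
      (inv_eq_of_mul_eq_one_right h1).symm
  have hUmod : ∀ a b : ℕ, u ^ a = u ^ b → a % (r + 1) = b % (r + 1) := by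
    intro a b hab
    have h1 : u ^ (a % (r + 1)) = u ^ (b % (r + 1)) := by
      calc u ^ (a % (r + 1)) = u ^ a := by rw [← hu]; exact pow_mod_orderOf u a
      _ = u ^ b := hab
      _ = u ^ (b % (r + 1)) := by rw [← hu]; exact (pow_mod_orderOf u b).symm
    exact myUinj hu (Nat.mod_lt _ (by omega)) (Nat.mod_lt _ (by omega)) h1
  have hEvenPow : ∀ jj kk : ℕ, jj < r + 1 → u ^ (2 * kk) = u ^ jj → Even jj := by
    intro jj kk hjj hpow
    have hmodeq : (2 * kk) % (r + 1) = jj % (r + 1) := hUmod _ _ hpow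
    rw [Nat.mod_eq_of_lt hjj] at hmodeq
    have hdm := Nat.div_add_mod (2 * kk) (r + 1)
    obtain ⟨mm, hmm⟩ := hodd
    obtain ⟨Q, hQ2⟩ : ∃ Q, (r + 1) * (2 * kk / (r + 1)) = 2 * Q :=
      ⟨(mm + 1) * (2 * kk / (r + 1)), by rw [hmm]; ring⟩
    rw [hmodeq, hQ2] at hdm
    rw [Nat.even_iff]
    omega
  have hTiff : ∀ j : ℕ, (Algebra.trace (ZMod r) F (u ^ j) = t ↔ u ^ j + (u ^ j)⁻¹ = ι t) := by
    intro j
    constructor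
    · intro h
      rw [← h, ← hxjr j]
      exact (htrace _).symm
    · intro h
      apply hinj
      rw [htrace, hxjr j, h]
  have hquadfac : ∀ x v : F, x ≠ 0 → v ≠ 0 → x + x⁻¹ = v + v⁻¹ → x = v ∨ x = v⁻¹ := by
    intro x v hx hv e1
    have hxx : x * x⁻¹ = 1 := mul_inv_cancel₀ hx
    have hvv : v * v⁻¹ = 1 := mul_inv_cancel₀ hv
    have hfac : (x - v) * (x - v⁻¹) = 0 := by linear_combination x * e1 - hxx + hvv
    rcases mul_eq_zero.mp hfac with h | h
    · exact Or.inl (sub_eq_zero.mp h)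
    · exact Or.inr (sub_eq_zero.mp h)
  have hpm : ∀ a : ZMod r, a ^ (r + 1) = 1 → a = 1 ∨ a = -1 := by
    intro a ha
    have ha0 : a ≠ 0 := by rintro rfl; rw [zero_pow (by omega)] at ha; exact zero_ne_one ha
    have h1 : a ^ (r - 1) = 1 := ZMod.pow_card_sub_one_eq_one ha0
    have h2' : a ^ 2 = 1 := by
      have he : a ^ (r + 1) = a ^ (r - 1) * a ^ 2 := by rw [← pow_add]; congr 1; omega
      rw [he, h1, one_mul] at ha
      exact ha
    have hfac : (a - 1) * (a + 1) = 0 := by linear_combination h2'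
    rcases mul_eq_zero.mp hfac with h | h
    · exact Or.inl (sub_eq_zero.mp h)
    · exact Or.inr (eq_neg_of_add_eq_zero_left h)
  by_cases ht2 : t = 2
  · subst ht2
    have hι2 : ι (2 : ZMod r) = (2 : F) := map_ofNat ι 2
    have hfilt : (Finset.range (r + 1)).filter
        (fun j => Algebra.trace (ZMod r) F (u ^ j) = (2 : ZMod r)) = {0} := by
      ext j
      simp only [Finset.mem_filter, Finset.mem_range, Finset.mem_singleton]
      constructor
      · rintro ⟨hj, hT⟩
        have hx := (hTiff j).mp hT
        rw [hι2] at hx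
        have hxx : (u ^ j) * (u ^ j)⁻¹ = 1 := mul_inv_cancel₀ (hxj0 j)
        have hfac : (u ^ j - 1) ^ 2 = 0 := by linear_combination (u ^ j) * hx - hxx
        have h1 : u ^ j = 1 := by
          have h0 : u ^ j - 1 = 0 := pow_eq_zero_iff (n := 2) (by norm_num) |>.mp hfac
          linear_combination h0
        exact myUinj hu hj (by omega) (by rw [h1, pow_zero])
      · rintro rfl
        refine ⟨by omega, (hTiff 0).mpr ?_⟩
        rw [pow_zero, inv_one, hι2]
        norm_num
    rw [hfilt, Finset.sum_singleton, pow_zero]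
    have h22 : (2 : ZMod r) + 2 = 4 := by norm_num
    have h20 : (2 : ZMod r) - 2 = 0 := by ring
    rw [h22, h20, chiC_zero, chiC_of_square h4Z hsq4]
    ring
  · by_cases htm2 : t = -2
    · subst htm2
      have hιm2 : ι (-2 : ZMod r) = (-2 : F) := by rw [map_neg, map_ofNat]
      set m := (r + 1) / 2 with hm
      have hmlt : m < r + 1 := by omega
      have hm0 : m ≠ 0 := by omega
      have h2m : 2 * m = r + 1 := by obtain ⟨k, hk⟩ := hodd; omega
      have hum : u ^ m = -1 := by
        have hsq' : (u ^ m) ^ 2 = 1 := by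
          rw [← pow_mul, mul_comm m 2, h2m, hU1]
        have hfac : (u ^ m - 1) * (u ^ m + 1) = 0 := by linear_combination hsq'
        rcases mul_eq_zero.mp hfac with h' | h'
        · exfalso
          have hone : u ^ m = u ^ 0 := by rw [pow_zero]; exact sub_eq_zero.mp h'
          exact hm0 (myUinj hu hmlt (by omega) hone)
        · exact eq_neg_of_add_eq_zero_left h'
      have hfilt : (Finset.range (r + 1)).filter
          (fun j => Algebra.trace (ZMod r) F (u ^ j) = (-2 : ZMod r)) = {m} := by
        ext j
        simp only [Finset.mem_filter, Finset.mem_range, Finset.mem_singleton]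
        constructor
        · rintro ⟨hj, hT⟩
          have hx := (hTiff j).mp hT
          rw [hιm2] at hx
          have hxx : (u ^ j) * (u ^ j)⁻¹ = 1 := mul_inv_cancel₀ (hxj0 j)
          have hfac : (u ^ j + 1) ^ 2 = 0 := by linear_combination (u ^ j) * hx - hxx
          have h0 : u ^ j + 1 = 0 := pow_eq_zero_iff (n := 2) (by norm_num) |>.mp hfac
          have h1 : u ^ j = u ^ m := by rw [hum]; linear_combination h0
          exact myUinj hu hj hmlt h1
        · rintro rfl
          refine ⟨hmlt, (hTiff m).mpr ?_⟩
          rw [hum, hιm2]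
          norm_num
      rw [hfilt, Finset.sum_singleton]
      have hadd : (-2 : ZMod r) + 2 = 0 := by ring
      have hsub : (-2 : ZMod r) - 2 = -4 := by ring
      rw [hadd, hsub, chiC_zero, zero_sub]
      have hm4 : (-4 : ZMod r) = -1 * 4 := by ring
      rw [hm4, chiC_mul hr, chiC_of_square h4Z hsq4, mul_one]
      have hm1Z : (-1 : ZMod r) ≠ 0 := by
        intro hh'
        exact one_ne_zero (neg_eq_zero.mp hh')
      rcases Nat.even_or_odd m with he | ho
      · have hr4 : r % 4 = 3 := by
          rw [Nat.even_iff] at he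
          omega
        have hns : ¬ IsSquare (-1 : ZMod r) := by
          rw [ZMod.exists_sq_eq_neg_one_iff]
          simp [hr4]
        rw [chiC_of_nonsquare hns, Even.neg_one_pow he]
        norm_num
      · have hr4 : r % 4 = 1 := by
          rw [Nat.odd_iff] at ho
          omega
        have hs : IsSquare (-1 : ZMod r) := by
          rw [ZMod.exists_sq_eq_neg_one_iff]
          omega
        rw [chiC_of_square hm1Z hs, Odd.neg_one_pow ho]
    · -- main case
      have htp2 : t + 2 ≠ 0 := fun h => htm2 (by linear_combination h)
      have htm2' : t - 2 ≠ 0 := fun h => ht2 (by linear_combination h)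
      have hdfac : t ^ 2 - 4 = (t + 2) * (t - 2) := by ring
      have hd0 : t ^ 2 - 4 ≠ 0 := by
        rw [hdfac]; exact mul_ne_zero htp2 htm2'
      by_cases hsqd : IsSquare (t ^ 2 - 4)
      · have hfilt : (Finset.range (r + 1)).filter
            (fun j => Algebra.trace (ZMod r) F (u ^ j) = t) = ∅ := by
          rw [Finset.filter_eq_empty_iff]
          intro j hj hT
          have hx := (hTiff j).mp hT
          obtain ⟨s, hs⟩ := hsqd
          have hs0 : s ≠ 0 := by rintro rfl; rw [mul_zero] at hs; exact hd0 hs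
          set a : ZMod r := (t + s) / 2 with ha
          set b : ZMod r := (t - s) / 2 with hb
          have hab1 : a + b = t := by
            rw [ha, hb, ← add_div, show t + s + (t - s) = 2 * t by ring]
            exact mul_div_cancel_left₀ t h2Z
          have hab2 : a * b = 1 := by
            rw [ha, hb, div_mul_div_comm]
            have hnum : (t + s) * (t - s) = 4 := by linear_combination hs
            have hden : (2 : ZMod r) * 2 = 4 := by norm_num
            rw [hnum, hden, div_self h4Z]
          have key : ∀ c : ZMod r, u ^ j = ι c → False := by
            intro c hc
            have hc1 : c ^ (r + 1) = 1 := by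
              apply hinj
              rw [map_pow, ← hc, hxj1 j, map_one]
            have hι2 : ι (2 : ZMod r) = (2 : F) := map_ofNat ι 2
            rcases hpm c hc1 with rfl | rfl
            · apply ht2
              apply hinj
              rw [hc, map_one] at hx
              rw [hι2, ← hx]
              norm_num
            · apply htm2
              apply hinj
              rw [hc, map_neg, map_one] at hx
              rw [map_neg, hι2, ← hx]
              norm_num
          have hxx : (u ^ j) * (u ^ j)⁻¹ = 1 := mul_inv_cancel₀ (hxj0 j)
          have he1 : u ^ j + (u ^ j)⁻¹ = ι a + ι b := by
            rw [← map_add, hab1]; exact hx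
          have hAB : ι a * ι b = 1 := by rw [← map_mul, hab2, map_one]
          have hxa : (u ^ j - ι a) * (u ^ j - ι b) = 0 := by
            linear_combination (u ^ j) * he1 - hxx + hAB
          rcases mul_eq_zero.mp hxa with h' | h'
          · exact key a (sub_eq_zero.mp h')
          · exact key b (sub_eq_zero.mp h')
        rw [hfilt, Finset.sum_empty]
        have hprod : chiC r (t + 2) * chiC r (t - 2) = 1 := by
          rw [← chiC_mul hr, ← hdfac]
          exact chiC_of_square hd0 hsqd
        rcases chiC_dichotomy (r := r) htp2 with h1 | h1 <;>
          rcases chiC_dichotomy (r := r) htm2' with h2' | h2' <;>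
          rw [h1, h2'] at hprod ⊢ <;> (try norm_num at hprod) <;> (try norm_num)
      · obtain ⟨v, hv1, hv0, hvr, hvt⟩ := myExist hr h2 hfix hsq t hsqd
        obtain ⟨j₀, hj₀, hj₀v⟩ := myUsurj hu v hv1
        have hι2 : ι (2 : ZMod r) = (2 : F) := map_ofNat ι 2
        have hvne1 : v ≠ 1 := by
          rintro rfl
          apply ht2
          apply hinj
          rw [hι2, ← hvt]
          norm_num
        have hvnem1 : v ≠ -1 := by
          rintro rfl
          apply htm2
          apply hinj
          rw [map_neg, hι2, ← hvt]
          norm_num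
        have hvv : v * v⁻¹ = 1 := mul_inv_cancel₀ hv0
        have hvninv : v ≠ v⁻¹ := by
          intro h
          have hv2 : v ^ 2 = 1 := by
            rw [sq]
            calc v * v = v * v⁻¹ := by rw [← h]
            _ = 1 := hvv
          have hfac : (v - 1) * (v + 1) = 0 := by linear_combination hv2
          rcases mul_eq_zero.mp hfac with h' | h'
          · exact hvne1 (sub_eq_zero.mp h')
          · exact hvnem1 (eq_neg_of_add_eq_zero_left h')
        have hj₀0 : j₀ ≠ 0 := by
          rintro rfl
          rw [pow_zero] at hj₀v
          exact hvne1 hj₀v.symm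
        set j₁ := r + 1 - j₀ with hj₁def
        have hj₁ : j₁ < r + 1 := by omega
        have hj₁v : u ^ j₁ = v⁻¹ := by
          have hmul : u ^ j₁ * v = 1 := by
            rw [← hj₀v, ← pow_add]
            have : j₁ + j₀ = r + 1 := by omega
            rw [this, hU1]
          rw [mul_comm] at hmul
          exact eq_inv_of_mul_eq_one_right hmul
        have hj01 : j₀ ≠ j₁ := by
          intro h
          apply hvninv
          rw [← hj₁v, ← hj₀v, h]
        have hfilt : (Finset.range (r + 1)).filter
            (fun j => Algebra.trace (ZMod r) F (u ^ j) = t) = {j₀, j₁} := by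
          ext j
          simp only [Finset.mem_filter, Finset.mem_range, Finset.mem_insert,
            Finset.mem_singleton]
          constructor
          · rintro ⟨hj, hT⟩
            have hx := (hTiff j).mp hT
            have hvt' : u ^ j + (u ^ j)⁻¹ = v + v⁻¹ := by rw [hx, hvt]
            rcases hquadfac (u ^ j) v (hxj0 j) hv0 hvt' with h' | h'
            · exact Or.inl (myUinj hu hj hj₀ (by rw [h', ← hj₀v]))
            · exact Or.inr (myUinj hu hj hj₁ (by rw [h', ← hj₁v]))
          · rintro (h | h)
            · subst h
              exact ⟨hj₀, (hTiff _).mpr (by rw [hj₀v]; exact hvt)⟩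
            · subst h
              refine ⟨hj₁, (hTiff _).mpr ?_⟩
              rw [hj₁v, inv_inv, ← hvt]
              ring
        rw [hfilt, Finset.sum_pair hj01]
        have hpar : (-1 : ℂ) ^ j₁ = (-1 : ℂ) ^ j₀ := by
          obtain ⟨k, hk⟩ := hodd
          rcases Nat.even_or_odd j₀ with he | ho
          · rw [Even.neg_one_pow he, Even.neg_one_pow ?_]
            rw [Nat.even_iff] at he ⊢
            omega
          · rw [Odd.neg_one_pow ho, Odd.neg_one_pow ?_]
            rw [Nat.odd_iff] at ho ⊢
            omega
        rw [hpar, ← two_mul]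
        have hprod : chiC r (t + 2) * chiC r (t - 2) = -1 := by
          rw [← chiC_mul hr, ← hdfac]
          exact chiC_of_nonsquare hsqd
        have hkey : (-1 : ℂ) ^ j₀ = chiC r (t + 2) := by
          by_cases hsq2 : IsSquare (t + 2)
          · rw [chiC_of_square htp2 hsq2]
            obtain ⟨s₀, hs₀⟩ := hsq2
            have hns2 : ¬ IsSquare (s₀ ^ 2 - 4) := by
              intro hsq3
              apply hsqd
              obtain ⟨w, hw⟩ := hsq3
              have h5 : t - 2 = w * w := by linear_combination hw + hs₀
              refine ⟨s₀ * w, ?_⟩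
              calc t ^ 2 - 4 = (t + 2) * (t - 2) := by ring
              _ = s₀ * w * (s₀ * w) := by rw [hs₀, h5]; ring
            obtain ⟨w, hw1, hw0, hwr, hwt⟩ := myExist hr h2 hfix hsq s₀ hns2
            obtain ⟨k, hk, hkw⟩ := myUsurj hu w hw1
            have hww : w * w⁻¹ = 1 := mul_inv_cancel₀ hw0
            have h6 : (w ^ 2)⁻¹ = w⁻¹ * w⁻¹ := by rw [sq, mul_inv]
            have h7 : ι s₀ * ι s₀ = ι t + 2 := by
              rw [← map_mul, ← hs₀, map_add, hι2]
            have hwsq : w ^ 2 + (w ^ 2)⁻¹ = ι t := by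
              rw [h6]
              linear_combination (w + w⁻¹ + ι s₀) * hwt - 2 * hww + h7
            have hw20 : w ^ 2 ≠ 0 := pow_ne_zero _ hw0
            have hvt' : w ^ 2 + (w ^ 2)⁻¹ = v + v⁻¹ := by rw [hwsq, hvt]
            have h8 := hquadfac (w ^ 2) v hw20 hv0 hvt'
            have h2k : u ^ (2 * k) = w ^ 2 := by
              rw [mul_comm, pow_mul, hkw]
            have hjeven : Even j₀ := by
              rcases h8 with h' | h'
              · exact hEvenPow j₀ k hj₀ (by rw [h2k, h', hj₀v])
              · have h9 : Even j₁ := hEvenPow j₁ k hj₁ (by rw [h2k, h', hj₁v])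
                obtain ⟨mm, hmm⟩ := hodd
                rw [Nat.even_iff] at h9 ⊢
                omega
            exact Even.neg_one_pow hjeven
          · rw [chiC_of_nonsquare hsq2]
            have hjodd : ¬ Even j₀ := by
              intro he
              obtain ⟨k, hk⟩ := he
              apply hsq2
              have hw0 : u ^ k ≠ 0 := hxj0 k
              have hwr : (u ^ k) ^ r = (u ^ k)⁻¹ := hxjr k
              have hwv : (u ^ k) ^ 2 = v := by
                rw [sq, ← pow_add, ← hk, hj₀v]
              have hsr : (u ^ k + (u ^ k)⁻¹) ^ r = u ^ k + (u ^ k)⁻¹ := by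
                rw [add_pow_char, hwr, inv_pow, hwr, inv_inv, add_comm]
              obtain ⟨c, hc⟩ := hfix _ hsr
              refine ⟨c, ?_⟩
              apply hinj
              rw [map_add, map_mul, hc, hι2]
              have hww : (u ^ k) * (u ^ k)⁻¹ = 1 := mul_inv_cancel₀ hw0
              have h6 : ((u ^ k) ^ 2)⁻¹ = (u ^ k)⁻¹ * (u ^ k)⁻¹ := by rw [sq, mul_inv]
              rw [← hvt, ← hwv, h6]
              linear_combination (-2 : F) * hww
            have hjo : Odd j₀ := Nat.not_even_iff_odd.mp hjodd
            rw [Odd.neg_one_pow hjo]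
        rw [hkey]
        rcases chiC_dichotomy (r := r) htp2 with h1 | h1 <;>
          rcases chiC_dichotomy (r := r) htm2' with h2' | h2' <;>
          rw [h1, h2'] at hprod ⊢ <;> (try norm_num at hprod) <;> (try norm_num)

end FiberHelper

set_option maxHeartbeats 1600000 in
/-- Lemma 4.5 ('S-matrix'): the PSU(3) S-matrix entries `s(a·b)` are proportional to the
PSU(2) S-matrix entries `χ(ab)·(ζ^{2ab} − ζ^{−2ab})` at `ξ = ζ⁴`. -/
theorem stmt18 (r : ℕ) [NeZero r] (hr : r.Prime) (hodd : Odd r) (h3 : r % 3 = 2)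
    (F : Type*) [Field F] [Fintype F] [Algebra (ZMod r) F]
    (hcard : Fintype.card F = r ^ 2)
    (u : F) (hu : orderOf u = r + 1) :
    ∃ c : ℂ, ∀ a b : ZMod r,
      sSum r u (a * b) =
        c * chiC r (a * b) * (zmodExp r (2 * a * b) - zmodExp r (-(2 * a * b))) := by
  haveI hFact : Fact r.Prime := ⟨hr⟩
  have h2 : r ≠ 2 := by rintro rfl; rw [Nat.odd_iff] at hodd; simp at hodd
  haveI : CharP F r := charP_of_injective_algebraMap (algebraMap (ZMod r) F).injective r
  have hfix : ∀ x : F, x ^ r = x → ∃ c : ZMod r, algebraMap (ZMod r) F c = x :=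
    fun x hx => myFix hr hodd hcard x hx
  have hsq : ∀ c : ZMod r, ∃ e : F, e ^ 2 = algebraMap (ZMod r) F c :=
    fun c => mySq hr hodd hcard c h2
  have hex : ∃ w : F, w ^ r ≠ w := by
    refine ⟨u, fun h => ?_⟩
    have h1 : u ^ (r + 1) = 1 := myU1 hu
    have h3' : u ^ 2 = 1 := by
      rw [sq]
      calc u * u = u ^ r * u := by rw [h]
      _ = u ^ (r + 1) := by rw [pow_succ]
      _ = 1 := h1
    have h4 := orderOf_le_of_pow_eq_one (by norm_num) h3'
    have := hr.two_le
    omega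
  have htrace : ∀ x : F, algebraMap (ZMod r) F (Algebra.trace (ZMod r) F x) = x + x ^ r :=
    myTrace hr hcard hex
  have hstar : ∀ m : ZMod r, sSum r u m
      = ∑ t : ZMod r, (chiC r (t + 2) - chiC r (t - 2)) * zmodExp r (m * t) := by
    intro m
    rw [sSum]
    rw [← Finset.sum_fiberwise_of_maps_to (t := (Finset.univ : Finset (ZMod r)))
      (g := fun j => Algebra.trace (ZMod r) F (u ^ j)) (fun j _ => Finset.mem_univ _)]
    apply Finset.sum_congr rfl
    intro t _
    have hcongr : ∀ j ∈ (Finset.range (r + 1)).filter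
        (fun j => Algebra.trace (ZMod r) F (u ^ j) = t),
        (-1 : ℂ) ^ j * zmodExp r (m * Algebra.trace (ZMod r) F (u ^ j))
          = (-1 : ℂ) ^ j * zmodExp r (m * t) := by
      intro j hj
      rw [(Finset.mem_filter.mp hj).2]
    rw [Finset.sum_congr rfl hcongr, ← Finset.sum_mul, myFiber hr hu hodd htrace hfix hsq t]
  have hshift : ∀ (m c : ZMod r), ∑ t : ZMod r, chiC r (t + c) * zmodExp r (m * t)
      = zmodExp r (-(c * m)) * ∑ t : ZMod r, chiC r t * zmodExp r (m * t) := by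
    intro m c
    rw [Finset.mul_sum]
    apply Fintype.sum_equiv (Equiv.addRight c)
    intro t
    simp only [Equiv.coe_addRight]
    have h1 : m * (t + c) = m * t + c * m := by ring
    have h2' : zmodExp r (-(c * m)) * zmodExp r (c * m) = 1 := by
      rw [← zmodExp_add, neg_add_cancel, zmodExp_zero]
    rw [h1, zmodExp_add]
    calc chiC r (t + c) * zmodExp r (m * t)
        = (zmodExp r (-(c * m)) * zmodExp r (c * m)) * (chiC r (t + c) * zmodExp r (m * t)) := by
          rw [h2', one_mul]
    _ = zmodExp r (-(c * m)) * (chiC r (t + c) * (zmodExp r (m * t) * zmodExp r (c * m))) := by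
          ring
  have hG : ∀ m : ZMod r, m ≠ 0 → ∑ t : ZMod r, chiC r t * zmodExp r (m * t)
      = chiC r m * ∑ t : ZMod r, chiC r t * zmodExp r t := by
    intro m hm
    rw [Finset.mul_sum]
    apply Fintype.sum_equiv (Equiv.mulLeft₀ m hm)
    intro t
    simp only [Equiv.mulLeft₀_apply]
    rw [chiC_mul hr]
    have hsq1 : chiC r m * chiC r m = 1 := by
      rcases chiC_dichotomy (r := r) hm with h | h <;> rw [h] <;> norm_num
    calc chiC r t * zmodExp r (m * t)
        = (chiC r m * chiC r m) * chiC r t * zmodExp r (m * t) := by rw [hsq1, one_mul]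
    _ = chiC r m * (chiC r m * chiC r t * zmodExp r (m * t)) := by ring
  refine ⟨-(∑ t : ZMod r, chiC r t * zmodExp r t), ?_⟩
  intro a b
  set m := a * b with hm
  have hg1 : 2 * a * b = 2 * m := by rw [hm]; ring
  rw [hg1]
  have hsplit : ∑ t : ZMod r, (chiC r (t + 2) - chiC r (t - 2)) * zmodExp r (m * t)
      = (∑ t : ZMod r, chiC r (t + 2) * zmodExp r (m * t))
        - ∑ t : ZMod r, chiC r (t + (-2)) * zmodExp r (m * t) := by
    rw [← Finset.sum_sub_distrib]
    apply Finset.sum_congr rfl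
    intro t _
    have : t - 2 = t + (-2) := by ring
    rw [this]
    ring
  rw [hstar m, hsplit, hshift m 2, hshift m (-2)]
  by_cases hm0 : m = 0
  · rw [hm0]
    simp [chiC_zero]
  · rw [hG m hm0]
    have e1 : -(-2 * m) = 2 * m := by ring
    rw [e1]
    ring
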